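/- Let C_1,…,C_k be a partition of [1:p] making the groups A_j := X_{C_j} mutually independent, and let Y = ∑_{w⊆[1:k]} g_w(A_w) be the Hoeffding decomposition of Y. Then for every u ⊆ [1:p], the Sobol index of Y satisfies S_u = ∑_{w⊆[1:k], u⊆C_w} S_w^g · S_u^{g,w}; equivalently, ∑_{v⊆u} (−1)^{|u|−|v|} Var(E(Y|X_v)) = ∑_{w⊆[1:k] with u⊆C_w} ∑_{v⊆u} (−1)^{|u|−|v|} Var(E(g_w(A_w)|X_v)). (Proposition 2) -/

import Mathlib

open MeasureTheory ProbabilityTheory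

section SobolAux

lemma my_variance_congr {Ω : Type*} {m0 : MeasurableSpace Ω} {μ : Measure Ω} {f g : Ω → ℝ} (h : f =ᵐ[μ] g) :
    variance f μ = variance g μ := by
  unfold ProbabilityTheory.variance ProbabilityTheory.evariance
  rw [integral_congr_ae h]
  congr 1
  refine lintegral_congr_ae ?_
  filter_upwards [h] with ω hω using by rw [hω]

lemma my_memℒp_two_condexp {Ω : Type*} {m m0 : MeasurableSpace Ω} {μ : Measure Ω} [IsProbabilityMeasure μ] (hm : m ≤ m0)
    {f : Ω → ℝ} (hf : MemLp f 2 μ) : MemLp (μ[f|m]) 2 μ := by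
  have hint : Integrable f μ := hf.integrable one_le_two
  have heq : ((condExpL2 ℝ ℝ hm (hf.toLp f) : Lp ℝ 2 μ) : Ω → ℝ) =ᵐ[μ] μ[f|m] := by
    refine ae_eq_condExp_of_forall_setIntegral_eq hm hint
      (fun s hs hμs => integrableOn_condExpL2_of_measure_ne_top hm hμs.ne _)
      (fun s hs hμs => ?_) (aestronglyMeasurable_condExpL2 hm _)
    rw [integral_condExpL2_eq hm (hf.toLp f) hs hμs.ne]
    exact setIntegral_congr_ae (hm s hs) ((MemLp.coeFn_toLp hf).mono fun x hx _ => hx)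
  exact (Lp.memLp _).ae_eq heq

lemma my_integrable_mul {Ω : Type*} {m0 : MeasurableSpace Ω} {μ : Measure Ω} [IsFiniteMeasure μ] {f g : Ω → ℝ}
    (hf : MemLp f 2 μ) (hg : MemLp g 2 μ) : Integrable (fun ω => f ω * g ω) μ := by
  have h : MemLp (f • g) 1 μ :=
    hg.smul (φ := f) hf
  have := memLp_one_iff_integrable.mp h
  exact this

lemma my_integral_mul_condexp {Ω : Type*} {m m0 : MeasurableSpace Ω} {μ : Measure Ω} [IsProbabilityMeasure μ] (hm : m ≤ m0)
    {f g : Ω → ℝ} (hg : StronglyMeasurable[m] g) (hf2 : MemLp f 2 μ) (hg2 : MemLp g 2 μ) :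
    ∫ ω, g ω * (μ[f|m]) ω ∂μ = ∫ ω, g ω * f ω ∂μ := by
  have hfint : Integrable f μ := hf2.integrable one_le_two
  have hgf : Integrable (g * f) μ := by
    exact my_integrable_mul hg2 hf2
  have h1 : μ[g * f|m] =ᵐ[μ] g * μ[f|m] := condExp_mul_of_stronglyMeasurable_left hg hgf hfint
  calc ∫ ω, g ω * (μ[f|m]) ω ∂μ = ∫ ω, (μ[g * f|m]) ω ∂μ := by
        refine (integral_congr_ae ?_).symm
        filter_upwards [h1] with ω hω using by simpa [Pi.mul_apply] using hω
    _ = ∫ ω, (g * f) ω ∂μ := integral_condExp hm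
    _ = ∫ ω, g ω * f ω ∂μ := by simp [Pi.mul_apply]

lemma my_sup_eq_generateFrom {Ω : Type*} (ma mb : MeasurableSpace Ω) :
    ma ⊔ mb = MeasurableSpace.generateFrom
      {t | ∃ a, MeasurableSet[ma] a ∧ ∃ b, MeasurableSet[mb] b ∧ t = a ∩ b} := by
  refine le_antisymm (sup_le ?_ ?_) (MeasurableSpace.generateFrom_le ?_)
  · intro a ha
    exact MeasurableSpace.measurableSet_generateFrom
      ⟨a, ha, Set.univ, MeasurableSet.univ, (Set.inter_univ a).symm⟩
  · intro b hb
    exact MeasurableSpace.measurableSet_generateFrom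
      ⟨Set.univ, MeasurableSet.univ, b, hb, (Set.univ_inter b).symm⟩
  · rintro t ⟨a, ha, b, hb, rfl⟩
    exact ((le_sup_left : ma ≤ ma ⊔ mb) _ ha).inter ((le_sup_right : mb ≤ ma ⊔ mb) _ hb)

lemma my_condexp_sup_indep {Ω : Type*} {m₁ ma mb m0 : MeasurableSpace Ω} {μ : Measure Ω} [IsProbabilityMeasure μ]
    (hma : ma ≤ m₁) (h₁ : m₁ ≤ m0) (hb : mb ≤ m0) (hindep : Indep m₁ mb μ)
    {f : Ω → ℝ} (hf : StronglyMeasurable[m₁] f) (hfint : Integrable f μ) :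
    μ[f | ma ⊔ mb] =ᵐ[μ] μ[f | ma] := by
  have hma0 : ma ≤ m0 := hma.trans h₁
  have hab : ma ⊔ mb ≤ m0 := sup_le hma0 hb
  have key : ∀ h : Ω → ℝ, StronglyMeasurable[m₁] h → Integrable h μ →
      ∀ b : Set Ω, MeasurableSet[mb] b →
      ∫ x in b, h x ∂μ = (μ b).toReal * ∫ x, h x ∂μ := by
    intro h hh hhint b hbm
    rw [← setIntegral_condExp hb hhint hbm,
      setIntegral_congr_ae (hb _ hbm) ((condExp_indep_eq h₁ hb hh hindep).mono fun x hx _ => hx),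
      setIntegral_const, smul_eq_mul, measureReal_def]
  have main : ∀ t : Set Ω, MeasurableSet[ma ⊔ mb] t →
      ∫ x in t, (μ[f|ma]) x ∂μ = ∫ x in t, f x ∂μ := by
    have hpi : IsPiSystem
        {t : Set Ω | ∃ a, MeasurableSet[ma] a ∧ ∃ b, MeasurableSet[mb] b ∧ t = a ∩ b} := by
      rintro t1 ⟨a1, ha1, b1, hb1, rfl⟩ t2 ⟨a2, ha2, b2, hb2, rfl⟩ _
      exact ⟨a1 ∩ a2, ha1.inter ha2, b1 ∩ b2, hb1.inter hb2, Set.inter_inter_inter_comm a1 b1 a2 b2⟩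
    intro t ht
    refine MeasurableSpace.induction_on_inter (m := ma ⊔ mb)
      (C := fun t _ => ∫ x in t, (μ[f|ma]) x ∂μ = ∫ x in t, f x ∂μ)
      (my_sup_eq_generateFrom ma mb) hpi ?_ ?_ ?_ ?_ t ht
    · simp
    · rintro t' ⟨a, ha, b, hbm, rfl⟩
      have hma1 : MeasurableSet[m₁] a := hma _ ha
      have ha0 : MeasurableSet[m0] a := hma0 _ ha
      have hcex : ∫ x in a ∩ b, (μ[f|ma]) x ∂μ = (μ b).toReal * ∫ x in a, (μ[f|ma]) x ∂μ := by
        rw [Set.inter_comm, ← setIntegral_indicator ha0,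
          key _ (((stronglyMeasurable_condExp (m := ma)).mono hma).indicator hma1)
            (integrable_condExp.indicator ha0) b hbm, integral_indicator ha0]
      have hfx : ∫ x in a ∩ b, f x ∂μ = (μ b).toReal * ∫ x in a, f x ∂μ := by
        rw [Set.inter_comm, ← setIntegral_indicator ha0,
          key _ (hf.indicator hma1) (hfint.indicator ha0) b hbm, integral_indicator ha0]
      rw [hcex, hfx, setIntegral_condExp hma0 hfint ha]
    · intro t' htm' hC
      have ht0 : MeasurableSet[m0] t' := hab _ htm'
      have e1 := integral_add_compl ht0 (integrable_condExp (f := f) (m := ma) (μ := μ))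
      have e2 := integral_add_compl ht0 hfint
      have e3 : ∫ x, (μ[f|ma]) x ∂μ = ∫ x, f x ∂μ := integral_condExp hma0
      linarith
    · intro g hdis hmeas hC
      have h1 := hasSum_integral_iUnion (μ := μ) (fun i => hab _ (hmeas i)) hdis
        (integrable_condExp (f := f) (m := ma) (μ := μ)).integrableOn
      have h2 := hasSum_integral_iUnion (μ := μ) (fun i => hab _ (hmeas i)) hdis
        hfint.integrableOn
      have he : (fun n => ∫ x in g n, (μ[f|ma]) x ∂μ) = fun n => ∫ x in g n, f x ∂μ :=
        funext hC
      rw [he] at h1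
      exact h1.unique h2
  refine (ae_eq_condExp_of_forall_setIntegral_eq hab hfint
    (fun s _ _ => integrable_condExp.integrableOn)
    (fun s hs _ => main s hs)
    ((stronglyMeasurable_condExp (m := ma)).aestronglyMeasurable.mono le_sup_left)).symm

lemma my_variance_eq {Ω : Type*} {m0 : MeasurableSpace Ω} {μ : Measure Ω} [IsProbabilityMeasure μ]
    {X : Ω → ℝ} (hX : MemLp X 2 μ) :
    variance X μ = ∫ ω, X ω * X ω ∂μ - (∫ ω, X ω ∂μ) ^ 2 := by
  rw [variance_eq_sub hX]
  congr 1
  exact integral_congr_ae (Filter.EventuallyEq.of_eq (funext fun ω => by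
    simp [Pi.pow_apply, pow_two]))

end SobolAux

/-- Proposition 2: Under the Hoeffding decomposition with independent
groups, for every `u ⊆ [1:p]` the Sobol index of `Y` satisfies
`S_u = ∑_{w⊆[1:k], u⊆C_w} S_w^g · S_u^{g,w}`; equivalently (clearing the common
denominator `Var(Y)` and the factors `Var(g_w(A_w))`),
`∑_{v⊆u} (-1)^{|u|-|v|} Var(E(Y|X_v))
  = ∑_{w⊆[1:k], u⊆C_w} ∑_{v⊆u} (-1)^{|u|-|v|} Var(E(g_w(A_w)|X_v))`. -/
theorem sobol_indices_decomposition
    {Ω : Type*} [MeasurableSpace Ω] (μ : Measure Ω) [IsProbabilityMeasure μ]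
    {p k : ℕ} {E : Fin p → Type*} [∀ i, MeasurableSpace (E i)]
    (X : ∀ i, Ω → E i) (hX : ∀ i, Measurable (X i))
    (C : Fin k → Finset (Fin p))
    (hpart : ∀ i : Fin p, ∃! j : Fin k, i ∈ C j)
    (hindep : iIndep
      (fun j : Fin k => ⨆ i ∈ C j, MeasurableSpace.comap (X i) inferInstance) μ)
    (Y : Ω → ℝ) (hY : MemLp Y 2 μ) (hVarY : variance Y μ ≠ 0)
    (G : Finset (Fin k) → Ω → ℝ)
    (hGmeas : ∀ w : Finset (Fin k),
      StronglyMeasurable[⨆ i ∈ w.biUnion C, MeasurableSpace.comap (X i) inferInstance]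
        (G w))
    (hGL2 : ∀ w : Finset (Fin k), MemLp (G w) 2 μ)
    (hsum : Y =ᵐ[μ] fun ω => ∑ w : Finset (Fin k), G w ω)
    (hzero : ∀ w z : Finset (Fin k), ¬ w ⊆ z →
      μ[G w | ⨆ i ∈ z.biUnion C, MeasurableSpace.comap (X i) inferInstance] =ᵐ[μ] 0)
    (u : Finset (Fin p)) :
    ∑ v ∈ u.powerset, (-1 : ℝ) ^ (u.card - v.card) *
        variance (μ[Y | ⨆ i ∈ v, MeasurableSpace.comap (X i) inferInstance]) μ
      = ∑ w ∈ Finset.univ.filter (fun w : Finset (Fin k) => u ⊆ w.biUnion C),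
          ∑ v ∈ u.powerset, (-1 : ℝ) ^ (u.card - v.card) *
            variance (μ[G w | ⨆ i ∈ v, MeasurableSpace.comap (X i) inferInstance]) μ := by
  
  classical
  let M : Finset (Fin p) → MeasurableSpace Ω :=
    fun v => ⨆ i ∈ v, MeasurableSpace.comap (X i) inferInstance
  have hMle : ∀ v, M v ≤ (inferInstance : MeasurableSpace Ω) :=
    fun v => iSup_le fun i => iSup_le fun _ => (hX i).comap_le
  have hMmono : ∀ {v v' : Finset (Fin p)}, v ⊆ v' → M v ≤ M v' :=
    fun h => biSup_mono fun i hi => h hi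
  have hGint : ∀ w, Integrable (G w) μ := fun w => (hGL2 w).integrable one_le_two
  have hMC : ∀ w : Finset (Fin k), M (w.biUnion C) = ⨆ j ∈ w, M (C j) := by
    intro w
    refine le_antisymm (iSup₂_le fun i hi => ?_) (iSup₂_le fun j hj => ?_)
    · obtain ⟨j, hj, hij⟩ := Finset.mem_biUnion.mp hi
      exact le_trans
        (le_iSup₂ (f := fun i (_ : i ∈ C j) => MeasurableSpace.comap (X i) inferInstance) i hij)
        (le_iSup₂ (f := fun j (_ : j ∈ w) => M (C j)) j hj)
    · exact biSup_mono fun i hi => Finset.mem_biUnion.mpr ⟨j, hj, hi⟩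
  -- independence between a union of groups and variables outside those groups
  have hindep2 : ∀ (w : Finset (Fin k)) (v : Finset (Fin p)),
      Indep (M (w.biUnion C)) (M (v \ w.biUnion C)) μ := by
    intro w v
    have h0 := indep_biSup_compl (fun j => hMle (C j)) hindep (↑w : Set (Fin k))
    refine indep_of_indep_of_le_left (indep_of_indep_of_le_right h0 ?_) ?_
    · refine iSup₂_le fun i hi => ?_
      obtain ⟨hiv, hiC⟩ := Finset.mem_sdiff.mp hi
      obtain ⟨j, hj, -⟩ := hpart i
      have hjw : j ∈ (↑w : Set (Fin k))ᶜ := by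
        simp only [Set.mem_compl_iff, Finset.mem_coe]
        exact fun hjw => hiC (Finset.mem_biUnion.mpr ⟨j, hjw, hj⟩)
      exact le_trans
        (le_iSup₂ (f := fun i (_ : i ∈ C j) => MeasurableSpace.comap (X i) inferInstance) i hj)
        (le_iSup₂ (f := fun j (_ : j ∈ (↑w : Set (Fin k))ᶜ) =>
          ⨆ i ∈ C j, MeasurableSpace.comap (X i) inferInstance) j hjw)
    · rw [hMC w]
      refine iSup₂_le fun j hj => ?_
      exact le_iSup₂ (f := fun j (_ : j ∈ (↑w : Set (Fin k))) =>
        ⨆ i ∈ C j, MeasurableSpace.comap (X i) inferInstance) j (Finset.mem_coe.mpr hj)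
  -- conditional expectation only depends on the variables inside the groups of w
  have key4 : ∀ (w : Finset (Fin k)) (v : Finset (Fin p)),
      μ[G w | M v] =ᵐ[μ] μ[G w | M (v ∩ w.biUnion C)] := by
    intro w v
    have hsplit : M v = M (v ∩ w.biUnion C) ⊔ M (v \ w.biUnion C) := by
      refine le_antisymm (iSup₂_le fun i hi => ?_)
        (sup_le (hMmono Finset.inter_subset_left) (hMmono Finset.sdiff_subset))
      by_cases hic : i ∈ w.biUnion C
      · exact le_trans (le_iSup₂
          (f := fun i (_ : i ∈ v ∩ w.biUnion C) => MeasurableSpace.comap (X i) inferInstance)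
          i (Finset.mem_inter.mpr ⟨hi, hic⟩)) le_sup_left
      · exact le_trans (le_iSup₂
          (f := fun i (_ : i ∈ v \ w.biUnion C) => MeasurableSpace.comap (X i) inferInstance)
          i (Finset.mem_sdiff.mpr ⟨hi, hic⟩)) le_sup_right
    have hGm : StronglyMeasurable[M (w.biUnion C)] (G w) := hGmeas w
    have h := my_condexp_sup_indep
      (hMmono (Finset.inter_subset_right : v ∩ w.biUnion C ⊆ w.biUnion C))
      (hMle (w.biUnion C)) (hMle (v \ w.biUnion C)) (hindep2 w v) hGm (hGint w)
    rw [hsplit]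
    exact h
  -- centering
  have hmean : ∀ w : Finset (Fin k), w ≠ ∅ → ∫ ω, G w ω ∂μ = 0 := by
    intro w hw
    have h0 := hzero w ∅ (by simpa [Finset.subset_empty] using hw)
    have hbot : M ((∅ : Finset (Fin k)).biUnion C) = (⊥ : MeasurableSpace Ω) :=
      le_antisymm (iSup₂_le fun i hi => absurd hi (by simp)) bot_le
    have h0' : μ[G w | (⊥ : MeasurableSpace Ω)] =ᵐ[μ] 0 := by
      rw [← hbot]; exact h0
    rw [condExp_bot] at h0'
    obtain ⟨ω, hω⟩ := h0'.exists
    simpa using hω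
  -- orthogonality
  have horto0 : ∀ (v : Finset (Fin p)) (w w' : Finset (Fin k)), ¬ w ⊆ w' →
      ∫ ω, (μ[G w | M v]) ω * (μ[G w' | M v]) ω ∂μ = 0 := by
    intro v w w' hss
    set B : Ω → ℝ := μ[G w' | M (v ∩ w'.biUnion C)] with hB
    have hBm2 : MemLp B 2 μ := my_memℒp_two_condexp (hMle _) (hGL2 w')
    have hBsm : StronglyMeasurable[M (v ∩ w'.biUnion C)] B := stronglyMeasurable_condExp
    have hz : μ[G w | M (w'.biUnion C)] =ᵐ[μ] 0 := hzero w w' hss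
    calc ∫ ω, (μ[G w | M v]) ω * (μ[G w' | M v]) ω ∂μ
        = ∫ ω, B ω * (μ[G w | M v]) ω ∂μ := by
          refine integral_congr_ae ?_
          filter_upwards [key4 w' v] with ω hω
          rw [hω, mul_comm]
      _ = ∫ ω, B ω * G w ω ∂μ :=
          my_integral_mul_condexp (hMle v)
            (hBsm.mono (hMmono Finset.inter_subset_left)) (hGL2 w) hBm2
      _ = ∫ ω, B ω * (μ[G w | M (w'.biUnion C)]) ω ∂μ :=
          (my_integral_mul_condexp (hMle _)
            (hBsm.mono (hMmono Finset.inter_subset_right)) (hGL2 w) hBm2).symm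
      _ = 0 := by
          have hzz : (fun ω => B ω * (μ[G w | M (w'.biUnion C)]) ω) =ᵐ[μ] (fun _ => (0:ℝ)) := by
            filter_upwards [hz] with ω hω
            simp [hω]
          rw [integral_congr_ae hzz, integral_zero]
  have horto : ∀ (v : Finset (Fin p)) (w w' : Finset (Fin k)), w ≠ w' →
      ∫ ω, (μ[G w | M v]) ω * (μ[G w' | M v]) ω ∂μ = 0 := by
    intro v w w' hne
    by_cases hss : w ⊆ w'
    · have hss' : ¬ w' ⊆ w := fun h => hne (Finset.Subset.antisymm hss h)
      rw [show (fun ω => (μ[G w | M v]) ω * (μ[G w' | M v]) ω)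
          = fun ω => (μ[G w' | M v]) ω * (μ[G w | M v]) ω from funext fun ω => mul_comm _ _]
      exact horto0 v w' w hss'
    · exact horto0 v w w' hss
  -- decomposition of the variance of the conditional expectation
  have hvar : ∀ v : Finset (Fin p),
      variance (μ[Y | M v]) μ = ∑ w : Finset (Fin k), variance (μ[G w | M v]) μ := by
    intro v
    have hle := hMle v
    have hA2 : ∀ w : Finset (Fin k), MemLp (μ[G w | M v]) 2 μ :=
      fun w => my_memℒp_two_condexp hle (hGL2 w)
    have hAint : ∀ w : Finset (Fin k), Integrable (μ[G w | M v]) μ :=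
      fun _ => integrable_condExp
    have hprod : ∀ w w' : Finset (Fin k),
        Integrable (fun ω => (μ[G w | M v]) ω * (μ[G w' | M v]) ω) μ :=
      fun w w' => my_integrable_mul (hA2 w) (hA2 w')
    have hSA : μ[Y | M v] =ᵐ[μ] fun ω => ∑ w : Finset (Fin k), (μ[G w | M v]) ω := by
      have h3 : (fun ω => ∑ w : Finset (Fin k), G w ω) = ∑ w : Finset (Fin k), G w := by
        funext ω; simp
      have h1 : μ[Y | M v] =ᵐ[μ] μ[(∑ w : Finset (Fin k), G w : Ω → ℝ) | M v] := by
        refine condExp_congr_ae ?_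
        rw [← h3]; exact hsum
      have h2 : μ[(∑ w : Finset (Fin k), G w : Ω → ℝ) | M v]
          =ᵐ[μ] ∑ w : Finset (Fin k), μ[G w | M v] :=
        condExp_finsetSum (fun w _ => hGint w) (M v)
      refine (h1.trans h2).trans (Filter.EventuallyEq.of_eq ?_)
      funext ω; simp
    have hSA2 : MemLp (fun ω => ∑ w : Finset (Fin k), (μ[G w | M v]) ω) 2 μ :=
      memLp_finsetSum Finset.univ (fun w _ => hA2 w)
    have hRHS : ∀ w : Finset (Fin k), variance (μ[G w | M v]) μ
        = ∫ ω, (μ[G w | M v]) ω * (μ[G w | M v]) ω ∂μ - (∫ ω, (μ[G w | M v]) ω ∂μ) ^ 2 :=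
      fun w => my_variance_eq (hA2 w)
    have hsqint : ∫ ω, (∑ w : Finset (Fin k), (μ[G w | M v]) ω)
          * (∑ w' : Finset (Fin k), (μ[G w' | M v]) ω) ∂μ
        = ∑ w : Finset (Fin k), ∫ ω, (μ[G w | M v]) ω * (μ[G w | M v]) ω ∂μ := by
      have h1 : (fun ω => (∑ w : Finset (Fin k), (μ[G w | M v]) ω)
            * (∑ w' : Finset (Fin k), (μ[G w' | M v]) ω))
          = fun ω => ∑ w : Finset (Fin k), ∑ w' : Finset (Fin k),
              (μ[G w | M v]) ω * (μ[G w' | M v]) ω :=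
        funext fun ω => Finset.sum_mul_sum _ _ _ _
      rw [h1, integral_finset_sum _ (fun w _ => integrable_finset_sum _ fun w' _ => hprod w w')]
      refine Finset.sum_congr rfl fun w _ => ?_
      rw [integral_finset_sum _ (fun w' _ => hprod w w')]
      exact Finset.sum_eq_single_of_mem w (Finset.mem_univ w)
        (fun w' _ hne => horto v w w' (Ne.symm hne))
    have e1 : ∀ w : Finset (Fin k), ∫ ω, (μ[G w | M v]) ω ∂μ = ∫ ω, G w ω ∂μ :=
      fun w => integral_condExp hle
    have hmeans : ∑ w : Finset (Fin k), (∫ ω, (μ[G w | M v]) ω ∂μ) ^ 2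
        = (∑ w : Finset (Fin k), ∫ ω, (μ[G w | M v]) ω ∂μ) ^ 2 := by
      have e2 : ∑ w : Finset (Fin k), ∫ ω, (μ[G w | M v]) ω ∂μ = ∫ ω, G ∅ ω ∂μ := by
        rw [Finset.sum_congr rfl (fun w _ => e1 w)]
        exact Finset.sum_eq_single_of_mem ∅ (Finset.mem_univ ∅) (fun w _ hne => hmean w hne)
      have e3 : ∑ w : Finset (Fin k), (∫ ω, (μ[G w | M v]) ω ∂μ) ^ 2
          = (∫ ω, G ∅ ω ∂μ) ^ 2 := by
        rw [Finset.sum_congr rfl (fun w _ => by rw [e1 w])]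
        exact Finset.sum_eq_single_of_mem ∅ (Finset.mem_univ ∅)
          (fun w _ hne => by rw [hmean w hne]; ring)
      rw [e2, e3]
    rw [my_variance_congr hSA, my_variance_eq hSA2]
    simp only [hRHS]
    rw [Finset.sum_sub_distrib, hsqint, integral_finset_sum _ (fun w _ => hAint w), hmeans]
  -- variance only depends on v ∩ C_w
  have hVeq : ∀ (w : Finset (Fin k)) {v v' : Finset (Fin p)},
      v ∩ w.biUnion C = v' ∩ w.biUnion C →
      variance (μ[G w | M v]) μ = variance (μ[G w | M v']) μ := by
    intro w v v' h
    refine my_variance_congr ((key4 w v).trans ?_)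
    rw [h]
    exact (key4 w v').symm
  -- the alternating sum vanishes when u is not included in C_w
  have inner_zero : ∀ w : Finset (Fin k), ¬ u ⊆ w.biUnion C →
      (∑ v ∈ u.powerset, (-1 : ℝ) ^ (u.card - v.card) * variance (μ[G w | M v]) μ) = 0 := by
    intro w hw
    obtain ⟨i, hiu, hiC⟩ := Finset.not_subset.mp hw
    refine Finset.sum_involution (fun v _ => if i ∈ v then v.erase i else insert i v)
      ?_ ?_ ?_ ?_
    · intro v hv
      have hvu : v ⊆ u := Finset.mem_powerset.mp hv
      have hcards : v.card ≤ u.card := Finset.card_le_card hvu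
      by_cases h : i ∈ v
      · simp only [if_pos h]
        have hV : variance (μ[G w | M (v.erase i)]) μ = variance (μ[G w | M v]) μ := by
          refine hVeq w ?_
          ext j
          simp only [Finset.mem_inter, Finset.mem_erase]
          constructor
          · rintro ⟨⟨-, hj⟩, hjC⟩; exact ⟨hj, hjC⟩
          · rintro ⟨hj, hjC⟩; exact ⟨⟨fun he => hiC (he ▸ hjC), hj⟩, hjC⟩
        have h1 : 1 ≤ v.card := Finset.card_pos.mpr ⟨i, h⟩
        rw [Finset.card_erase_of_mem h, hV]
        have he : u.card - (v.card - 1) = (u.card - v.card) + 1 := by omega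
        rw [he, pow_succ]
        ring
      · simp only [if_neg h]
        have hV : variance (μ[G w | M (insert i v)]) μ = variance (μ[G w | M v]) μ := by
          refine hVeq w ?_
          ext j
          simp only [Finset.mem_inter, Finset.mem_insert]
          constructor
          · rintro ⟨hj | hj, hjC⟩
            · exact absurd (hj ▸ hjC) hiC
            · exact ⟨hj, hjC⟩
          · rintro ⟨hj, hjC⟩; exact ⟨Or.inr hj, hjC⟩
        have hlt : v.card + 1 ≤ u.card := by
          have hsub : insert i v ⊆ u := Finset.insert_subset hiu hvu
          have := Finset.card_le_card hsub
          rwa [Finset.card_insert_of_notMem h] at this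
        rw [Finset.card_insert_of_notMem h, hV]
        have he : u.card - v.card = (u.card - (v.card + 1)) + 1 := by omega
        rw [he, pow_succ]
        ring
    · intro v hv hne0
      by_cases h : i ∈ v
      · simp only [if_pos h]
        exact fun heq => Finset.notMem_erase i v (heq.symm ▸ h)
      · simp only [if_neg h]
        exact fun heq => h (heq ▸ Finset.mem_insert_self i v)
    · intro v hv
      have hvu : v ⊆ u := Finset.mem_powerset.mp hv
      by_cases h : i ∈ v
      · simp only [if_pos h]
        exact Finset.mem_powerset.mpr ((Finset.erase_subset i v).trans hvu)
      · simp only [if_neg h]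
        exact Finset.mem_powerset.mpr (Finset.insert_subset hiu hvu)
    · intro v hv
      by_cases h : i ∈ v
      · simp [h, Finset.notMem_erase, Finset.insert_erase]
      · simp [h, Finset.erase_insert]
  -- final assembly
  show (∑ v ∈ u.powerset, (-1 : ℝ) ^ (u.card - v.card) * variance (μ[Y | M v]) μ)
      = ∑ w ∈ Finset.univ.filter (fun w : Finset (Fin k) => u ⊆ w.biUnion C),
          ∑ v ∈ u.powerset, (-1 : ℝ) ^ (u.card - v.card) * variance (μ[G w | M v]) μ
  calc (∑ v ∈ u.powerset, (-1 : ℝ) ^ (u.card - v.card) * variance (μ[Y | M v]) μ)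
      = ∑ v ∈ u.powerset, ∑ w : Finset (Fin k),
          (-1 : ℝ) ^ (u.card - v.card) * variance (μ[G w | M v]) μ := by
        refine Finset.sum_congr rfl fun v _ => ?_
        rw [hvar v, Finset.mul_sum]
    _ = ∑ w : Finset (Fin k), ∑ v ∈ u.powerset,
          (-1 : ℝ) ^ (u.card - v.card) * variance (μ[G w | M v]) μ := Finset.sum_comm
    _ = ∑ w ∈ Finset.univ.filter (fun w : Finset (Fin k) => u ⊆ w.biUnion C),
          ∑ v ∈ u.powerset, (-1 : ℝ) ^ (u.card - v.card) * variance (μ[G w | M v]) μ := by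
        rw [← Finset.sum_filter_add_sum_filter_not Finset.univ
          (fun w : Finset (Fin k) => u ⊆ w.biUnion C)]
        rw [Finset.sum_eq_zero (fun w hw => inner_zero w (Finset.mem_filter.mp hw).2), add_zero]
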